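/- Let D be a noncommutative division ring and A an abelian maximal subgroup of D^*. Then the derived subgroup [D^*, D^*] is not contained in A. -/

import Mathlib

open scoped commutatorElement

/-- If `A` is an abelian maximal subgroup of `Dˣ` for a noncommutative
division ring `D`, then the derived subgroup of `Dˣ` is not contained in `A`. -/
theorem stmt_15 {D : Type*} [DivisionRing D]
    (hD : ∃ a b : D, a * b ≠ b * a)
    (A : Subgroup Dˣ) (hmax : IsCoatom A)
    (habel : ∀ a ∈ A, ∀ b ∈ A, a * b = b * a) :
    ¬ commutator Dˣ ≤ A := by
  intro hle
  -- A is normal in Dˣ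
  have hnorm : ∀ (g a : Dˣ), a ∈ A → g * a * g⁻¹ ∈ A := by
    intro g a ha
    have h1 : ⁅g, a⁆ ∈ commutator Dˣ := by
      rw [commutator_def]
      exact Subgroup.commutator_mem_commutator (Subgroup.mem_top g) (Subgroup.mem_top a)
    have h2 : ⁅g, a⁆ ∈ A := hle h1
    have h3 : g * a * g⁻¹ = ⁅g, a⁆ * a := by group
    rw [h3]; exact A.mul_mem h2 ha
  -- S : centralizer of A inside D
  set S : Set D := {x : D | ∀ a : Dˣ, a ∈ A → (a : D) * x = x * (a : D)} with hS
  have hS0 : (0 : D) ∈ S := by intro a _; simp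
  have hS1 : (1 : D) ∈ S := by intro a _; simp
  have hSsub : ∀ x ∈ S, ∀ y ∈ S, x - y ∈ S := by
    intro x hx y hy a ha
    rw [mul_sub, sub_mul, hx a ha, hy a ha]
  have hSmul : ∀ x ∈ S, ∀ y ∈ S, x * y ∈ S := by
    intro x hx y hy a ha
    rw [← mul_assoc, hx a ha, mul_assoc, hy a ha, mul_assoc]
  have hSinv : ∀ x ∈ S, x⁻¹ ∈ S := by
    intro x hx a ha
    rcases eq_or_ne x 0 with rfl | hx0
    · simp
    · have h := hx a ha
      have h2 : x⁻¹ * ((a : D) * x) * x⁻¹ = x⁻¹ * (x * (a : D)) * x⁻¹ := by rw [h]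
      rw [show x⁻¹ * ((a : D) * x) * x⁻¹ = x⁻¹ * (a : D) * (x * x⁻¹) by noncomm_ring,
        show x⁻¹ * (x * (a : D)) * x⁻¹ = (x⁻¹ * x) * ((a : D) * x⁻¹) by noncomm_ring,
        mul_inv_cancel₀ hx0, inv_mul_cancel₀ hx0, mul_one, one_mul] at h2
      exact h2.symm
  have hAS : ∀ a : Dˣ, a ∈ A → (a : D) ∈ S := by
    intro a ha b hb
    have := habel b hb a ha
    exact_mod_cast congrArg (Units.val) this
  -- S is conjugation-invariant
  have hconj : ∀ (y : D), y ≠ 0 → ∀ k ∈ S, y * k * y⁻¹ ∈ S := by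
    intro y hy k hk a ha
    set u : Dˣ := Units.mk0 y hy with hu
    have ha' : u⁻¹ * a * u ∈ A := by
      have := hnorm u⁻¹ a ha
      rwa [inv_inv] at this
    have hk' := hk _ ha'
    have hval : ((u⁻¹ * a * u : Dˣ) : D) = y⁻¹ * (a : D) * y := by
      push_cast [hu]
      rfl
    rw [hval] at hk'
    -- hk' : y⁻¹ * a * y * k = k * (y⁻¹ * a * y)
    have key : (a : D) * (y * k) = y * k * (y⁻¹ * (a : D) * y) := by
      calc (a : D) * (y * k)
          = (y * y⁻¹) * (a : D) * (y * k) := by rw [mul_inv_cancel₀ hy, one_mul]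
        _ = y * (y⁻¹ * (a : D) * y * k) := by noncomm_ring
        _ = y * (k * (y⁻¹ * (a : D) * y)) := by rw [hk']
        _ = y * k * (y⁻¹ * (a : D) * y) := by noncomm_ring
    calc (a : D) * (y * k * y⁻¹)
        = (a : D) * (y * k) * y⁻¹ := by noncomm_ring
      _ = y * k * (y⁻¹ * (a : D) * y) * y⁻¹ := by rw [key]
      _ = y * k * y⁻¹ * (a : D) * (y * y⁻¹) := by noncomm_ring
      _ = y * k * y⁻¹ * (a : D) := by rw [mul_inv_cancel₀ hy, mul_one]
  -- Cartan–Brauer–Hua style argument: every element of A is central in D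
  have hAcent : ∀ a : Dˣ, a ∈ A → ∀ x : D, (a : D) * x = x * (a : D) := by
    by_cases hall : ∀ x : D, x ∈ S
    · intro a ha x
      exact hall x a ha
    · push_neg at hall
      obtain ⟨w, hw⟩ := hall
      -- step 1: every k ∈ S commutes with every y ∉ S
      have step1 : ∀ k ∈ S, ∀ y : D, y ∉ S → k * y = y * k := by
        intro k hk y hyS
        have hy0 : y ≠ 0 := fun h => hyS (h ▸ hS0)
        have hy1 : (1 : D) + y ≠ 0 := by
          intro h
          have hym : y = -1 := eq_neg_of_add_eq_zero_right h
          have : (-1 : D) ∈ S := by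
            have := hSsub 0 hS0 1 hS1
            rwa [zero_sub] at this
          exact hyS (hym ▸ this)
        have hk1 : y * k * y⁻¹ ∈ S := hconj y hy0 k hk
        have hk2 : (1 + y) * k * (1 + y)⁻¹ ∈ S := hconj _ hy1 k hk
        set k1 := y * k * y⁻¹ with hk1d
        set k2 := (1 + y) * k * (1 + y)⁻¹ with hk2d
        have e1 : y * k = k1 * y := by
          rw [hk1d, mul_assoc (y * k), inv_mul_cancel₀ hy0, mul_one]
        have e2 : (1 + y) * k = k2 * (1 + y) := by
          rw [hk2d, mul_assoc ((1 + y) * k), inv_mul_cancel₀ hy1, mul_one]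
        have e2' : k + k1 * y = k2 + k2 * y := by
          rw [← e1]
          have := e2
          rwa [add_mul, one_mul, mul_add, mul_one] at this
        have e3 : k - k2 = (k2 - k1) * y := by
          rw [sub_mul]
          exact sub_eq_sub_iff_add_eq_add.mpr (e2'.trans (add_comm k2 (k2 * y)))
        have e4 : k2 = k1 := by
          by_contra hne
          have hd : k2 - k1 ≠ 0 := sub_ne_zero_of_ne hne
          have hyv : (k2 - k1)⁻¹ * (k - k2) = y := by
            rw [e3, ← mul_assoc, inv_mul_cancel₀ hd, one_mul]
          exact hyS (hyv ▸ hSmul _ (hSinv _ (hSsub _ hk2 _ hk1)) _ (hSsub _ hk _ hk2))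
        have e5 : k = k1 := by
          rw [e4, sub_self, zero_mul, sub_eq_zero] at e3
          exact e3
        calc k * y = k1 * y := by rw [← e5]
          _ = y * k := e1.symm
      -- step 2: every k ∈ S is central
      have step2 : ∀ k ∈ S, ∀ y : D, k * y = y * k := by
        intro k hk y
        by_cases hy : y ∈ S
        · have hwy : w + y ∉ S := by
            intro h
            exact hw ((add_sub_cancel_right w y) ▸ hSsub _ h _ hy)
          have h1 := step1 k hk w hw
          have h2 := step1 k hk (w + y) hwy
          rw [mul_add, add_mul, h1] at h2
          exact add_left_cancel h2
        · exact step1 k hk y hy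
      intro a ha x
      exact step2 _ (hAS a ha) x
  -- A is contained in the center of Dˣ
  have hAcentU : ∀ a : Dˣ, a ∈ A → a ∈ Subgroup.center Dˣ := by
    intro a ha
    rw [Subgroup.mem_center_iff]
    intro g
    ext
    push_cast
    exact (hAcent a ha g).symm
  -- every unit is central
  have hall : ∀ g : Dˣ, g ∈ Subgroup.center Dˣ := by
    intro g
    by_cases hg : g ∈ A
    · exact hAcentU g hg
    · have hle' : A ≤ Subgroup.centralizer {g} := by
        intro a ha
        rw [Subgroup.mem_centralizer_iff]
        intro h hh
        rcases hh with rfl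
        have := hAcentU a ha
        rw [Subgroup.mem_center_iff] at this
        exact this h
      have hgmem : g ∈ Subgroup.centralizer {g} := by
        rw [Subgroup.mem_centralizer_iff]
        intro h hh
        rcases hh with rfl
        rfl
      have hlt : A < Subgroup.centralizer {g} :=
        lt_of_le_of_ne hle' (fun h => hg (h ▸ hgmem))
      have htop : Subgroup.centralizer {g} = ⊤ := hmax.2 _ hlt
      rw [Subgroup.mem_center_iff]
      intro h
      have : h ∈ Subgroup.centralizer {g} := htop ▸ Subgroup.mem_top h
      rw [Subgroup.mem_centralizer_iff] at this
      exact (this g rfl).symm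
  -- contradiction with noncommutativity
  obtain ⟨a, b, hab⟩ := hD
  have ha0 : a ≠ 0 := by rintro rfl; simp at hab
  have hb0 : b ≠ 0 := by rintro rfl; simp at hab
  have := hall (Units.mk0 a ha0)
  rw [Subgroup.mem_center_iff] at this
  have h := this (Units.mk0 b hb0)
  apply hab
  have := congrArg Units.val h
  push_cast at this
  exact this.symm
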